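/- Let G = PSL_n(q), n ≥ 2, r a prime dividing gcd(n,q-1), and suppose r divides (q-1)/gcd(n,q-1). Then the nonsplit central extension Z_r.G (the quotient of SL_n(q) by the index-r subgroup of its center) does not embed into the permutation wreath product Z_r ≀ G (with respect to the action on P^(n-1)(q)) as a subextension over the trivial submodule. -/

import Mathlib

open scoped Pointwise

open Matrix Projectivization
open scoped LinearAlgebra.Projectivization

variable {n : ℕ} {F : Type*} [Field F]

/-- The action of `SL_n(F)` on the projective space `ℙ^{n-1}(F)`. -/
noncomputable instance slAction :
    MulAction (SpecialLinearGroup (Fin n) F) (ℙ F (Fin n → F)) where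
  smul g v := Projectivization.map (SpecialLinearGroup.toLin' g).toLinearMap
    (SpecialLinearGroup.toLin' g).injective v
  one_smul v := by
    induction v using Projectivization.ind with
    | h v hv =>
      show Projectivization.map _ _ _ = _
      rw [Projectivization.map_mk]
      simp
  mul_smul g h v := by
    induction v using Projectivization.ind with
    | h v hv =>
      show Projectivization.map _ _ _ = Projectivization.map _ _ (Projectivization.map _ _ _)
      rw [Projectivization.map_mk, Projectivization.map_mk, Projectivization.map_mk]
      simp

theorem sl_smul_mk (g : SpecialLinearGroup (Fin n) F) (v : Fin n → F) (hv : v ≠ 0) :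
    g • Projectivization.mk F v hv =
      Projectivization.mk F (SpecialLinearGroup.toLin' g v)
        ((SpecialLinearGroup.toLin' g).map_ne_zero_iff.2 hv) := by
  rfl

theorem center_acts_trivially (g : SpecialLinearGroup (Fin n) F)
    (hg : g ∈ Subgroup.center (SpecialLinearGroup (Fin n) F)) (v : ℙ F (Fin n → F)) :
    g • v = v := by
  induction v using Projectivization.ind with
  | h v hv =>
    obtain ⟨r, hr, hgr⟩ := Matrix.SpecialLinearGroup.mem_center_iff.mp hg
    simp only [Fintype.card_fin] at hr
    rcases Nat.eq_zero_or_pos n with hn | hn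
    · subst hn
      exact absurd (funext fun i => i.elim0) hv
    have hru : r ≠ 0 := fun h0 => by
      rw [h0, zero_pow (by omega)] at hr
      exact zero_ne_one hr
    rw [sl_smul_mk, mk_eq_mk_iff']
    refine ⟨r, ?_⟩
    rw [SpecialLinearGroup.toLin'_apply, ← hgr]
    funext i
    simp [Matrix.toLin'_apply, Matrix.mulVec_diagonal, Matrix.scalar_apply]

/-- The action of `PSL_n(F)` on the projective space `ℙ^{n-1}(F)`. -/
noncomputable instance pslAction :
    MulAction (ProjectiveSpecialLinearGroup (Fin n) F) (ℙ F (Fin n → F)) :=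
  MulAction.compHom _ <|
    QuotientGroup.lift (Subgroup.center (SpecialLinearGroup (Fin n) F))
      (MulAction.toPermHom (SpecialLinearGroup (Fin n) F) (ℙ F (Fin n → F)))
      (fun g hg => Equiv.ext fun v => center_acts_trivially g hg v)

theorem psl_smul (g : SpecialLinearGroup (Fin n) F) (v : ℙ F (Fin n → F)) :
    (QuotientGroup.mk g : ProjectiveSpecialLinearGroup (Fin n) F) • v = g • v := rfl
variable {G X : Type*} [Group G] [MulAction G X] (p : ℕ)

/-- The action of `G` on the permutation module `X → ZMod p` (written multiplicatively
so that it can serve as the kernel of a semidirect product). -/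
def permAut : G →* MulAut (Multiplicative (X → ZMod p)) where
  toFun g :=
    { toFun := fun v => Multiplicative.ofAdd (fun x => Multiplicative.toAdd v (g⁻¹ • x))
      invFun := fun v => Multiplicative.ofAdd (fun x => Multiplicative.toAdd v (g • x))
      left_inv := fun v => by
        apply Multiplicative.toAdd.injective
        funext x
        simp
      right_inv := fun v => by
        apply Multiplicative.toAdd.injective
        funext x
        simp
      map_mul' := fun v w => rfl }
  map_one' := by
    apply MulEquiv.ext
    intro v
    apply Multiplicative.toAdd.injective
    funext x
    simp
  map_mul' := fun g h => by
    apply MulEquiv.ext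
    intro v
    apply Multiplicative.toAdd.injective
    funext x
    simp [mul_smul]

/-- The permutation wreath product `ℤ_p ≀ G` for the action of `G` on `X`. -/
abbrev WreathProd (G X : Type*) [Group G] [MulAction G X] (p : ℕ) :=
  SemidirectProduct (Multiplicative (X → ZMod p)) G (permAut p)

/-- The diagonal embedding of `ZMod p` into the permutation module. -/
def constHom (X : Type*) (p : ℕ) :
    Multiplicative (ZMod p) →* Multiplicative (X → ZMod p) where
  toFun c := Multiplicative.ofAdd (fun _ => Multiplicative.toAdd c)
  map_one' := rfl
  map_mul' _ _ := rfl


section Aux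

theorem wreath_pow_left_toAdd {G X : Type*} [Group G] [MulAction G X] {p : ℕ}
    (w : WreathProd G X p) (x : X) (hx : w.right • x = x) (k : ℕ) :
    Multiplicative.toAdd ((w ^ k).left) x = k • Multiplicative.toAdd w.left x := by
  induction k with
  | zero => simp
  | succ k ih =>
    have hxi : w.right⁻¹ • x = x := by rw [inv_smul_eq_iff, hx]
    rw [pow_succ', SemidirectProduct.mul_left]
    have h2 : Multiplicative.toAdd (w.left * (permAut p) w.right (w ^ k).left) x
        = Multiplicative.toAdd w.left x
          + Multiplicative.toAdd ((w ^ k).left) (w.right⁻¹ • x) := rfl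
    rw [h2, hxi, ih, succ_nsmul']

end Aux

/-- Let `G = PSL_n(q)`, `r` a prime dividing `gcd(n,q-1)`, and
suppose `r ∣ (q-1)/gcd(n,q-1)`. Then the nonsplit central extension
`S = SL_n(q)/Z₀` (`Z₀` of index `r` in the center) does not embed into the
permutation wreath product `ℤ_r ≀ G` for the action on `ℙ^{n-1}(q)` as a
subextension over the trivial submodule `I`. -/
theorem stmt_15 (n : ℕ) (hn : 2 ≤ n) (F : Type) [Field F] [Fintype F]
    (r : ℕ) [Fact r.Prime]
    (h1 : r ∣ Nat.gcd n (Fintype.card F - 1))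
    (h2 : r ∣ (Fintype.card F - 1) / Nat.gcd n (Fintype.card F - 1))
    (Z₀ : Subgroup (SpecialLinearGroup (Fin n) F)) [Z₀.Normal]
    (hZ₀ : Z₀ ≤ Subgroup.center (SpecialLinearGroup (Fin n) F))
    (hZ₀idx : Z₀.relIndex (Subgroup.center (SpecialLinearGroup (Fin n) F)) = r) :
    ¬ ∃ S' : Subgroup (WreathProd (ProjectiveSpecialLinearGroup (Fin n) F)
        (ℙ F (Fin n → F)) r),
      S' ⊓ (SemidirectProduct.inl : Multiplicative (ℙ F (Fin n → F) → ZMod r) →*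
          WreathProd (ProjectiveSpecialLinearGroup (Fin n) F) (ℙ F (Fin n → F)) r).range =
        (SemidirectProduct.inl.comp (constHom (ℙ F (Fin n → F)) r)).range ∧
      (S' : Set (WreathProd (ProjectiveSpecialLinearGroup (Fin n) F) (ℙ F (Fin n → F)) r)) *
        ((SemidirectProduct.inl : Multiplicative (ℙ F (Fin n → F) → ZMod r) →*
          WreathProd (ProjectiveSpecialLinearGroup (Fin n) F) (ℙ F (Fin n → F)) r).range :
          Set (WreathProd (ProjectiveSpecialLinearGroup (Fin n) F) (ℙ F (Fin n → F)) r)) =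
        Set.univ ∧
      ∃ θ : (SpecialLinearGroup (Fin n) F ⧸ Z₀) ≃* S',
        ∀ w : SpecialLinearGroup (Fin n) F ⧸ Z₀,
          SemidirectProduct.rightHom ((θ w : WreathProd
              (ProjectiveSpecialLinearGroup (Fin n) F) (ℙ F (Fin n → F)) r)) =
            QuotientGroup.map Z₀ (Subgroup.center (SpecialLinearGroup (Fin n) F))
              (MonoidHom.id _) hZ₀ w := by
  classical
  rintro ⟨S', hinf, -, θ, hθ⟩
  set q := Fintype.card F with hq
  set d := Nat.gcd n (q - 1) with hd
  have hq2 : 2 ≤ q := Fintype.one_lt_card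
  have hd_dvd_n : d ∣ n := Nat.gcd_dvd_left _ _
  have hd_dvd : d ∣ q - 1 := Nat.gcd_dvd_right _ _
  have hr2 : 2 ≤ r := (Fact.out (p := r.Prime)).two_le
  have hdpos : 0 < d := Nat.gcd_pos_of_pos_left _ (by omega)
  have hdr : d * r ∣ q - 1 := by
    obtain ⟨k, hk⟩ := h2
    refine ⟨k, ?_⟩
    have h3 : d * ((q - 1) / d) = q - 1 := Nat.mul_div_cancel' hd_dvd
    rw [← h3, hk, mul_assoc]
  -- a generator of the units of F
  obtain ⟨ζ, hζ⟩ : ∃ ζ : Fˣ, orderOf ζ = q - 1 := by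
    obtain ⟨g, hg⟩ := IsCyclic.exists_generator (α := Fˣ)
    refine ⟨g, ?_⟩
    rw [orderOf_eq_card_of_forall_mem_zpowers hg, Nat.card_units, Nat.card_eq_fintype_card]
  set α : Fˣ := ζ ^ ((q - 1) / (d * r)) with hα_def
  have hα : orderOf α = d * r := by
    rw [hα_def, ← hζ, orderOf_pow_orderOf_div (by rw [hζ]; omega) (by rw [hζ]; exact hdr)]
  set lu : Fˣ := α ^ r with hlu_def
  have hlu : orderOf lu = d := by
    rw [hlu_def, orderOf_pow_of_dvd (x := α) (n := r) (by omega)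
      (by rw [hα]; exact dvd_mul_left r d), hα, Nat.mul_div_cancel _ (by omega : 0 < r)]
  have hlun : lu ^ n = 1 := by
    rw [← orderOf_dvd_iff_pow_eq_one, hlu]; exact hd_dvd_n
  -- the special linear matrix A
  set i0 : Fin n := ⟨0, by omega⟩ with hi0
  set β : Fˣ := (α ^ (n - 1))⁻¹ with hβ_def
  set v : Fin n → F := Function.update (fun _ => (α : F)) i0 (β : F) with hv_def
  have hprod : ∏ i : Fin n, v i = ((β * α ^ (n - 1) : Fˣ) : F) := by
    rw [hv_def, Finset.prod_update_of_mem (Finset.mem_univ _), Finset.prod_const]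
    have hc : (Finset.univ \ {i0}).card = n - 1 := by
      rw [Finset.card_sdiff_of_subset (Finset.subset_univ _), Finset.card_univ, Fintype.card_fin,
        Finset.card_singleton]
    rw [hc]; push_cast; ring
  have hdet : Matrix.det (Matrix.diagonal v) = 1 := by
    rw [Matrix.det_diagonal, hprod, hβ_def, inv_mul_cancel, Units.val_one]
  set A : SpecialLinearGroup (Fin n) F := ⟨Matrix.diagonal v, hdet⟩ with hA_def
  -- A ^ r is the scalar matrix lu
  have hβr : β ^ r = lu := by
    have h5 : lu ^ (n - 1) = lu⁻¹ := by
      apply eq_inv_of_mul_eq_one_left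
      rw [← pow_succ]
      have h6 : n - 1 + 1 = n := by omega
      rw [h6, hlun]
    rw [hβ_def, inv_pow, ← pow_mul, mul_comm (n - 1) r, pow_mul, ← hlu_def, h5, inv_inv]
  have hvr : v ^ r = fun _ => (lu : F) := by
    funext i
    rcases eq_or_ne i i0 with h | h
    · subst h
      rw [Pi.pow_apply, hv_def, Function.update_self, ← Units.val_pow_eq_pow_val, hβr]
    · rw [Pi.pow_apply, hv_def, Function.update_of_ne h, ← Units.val_pow_eq_pow_val, hlu_def]
  have hArval : ((A ^ r : SpecialLinearGroup (Fin n) F) : Matrix (Fin n) (Fin n) F)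
      = Matrix.scalar (Fin n) (lu : F) := by
    rw [Matrix.SpecialLinearGroup.coe_pow, hA_def, Matrix.diagonal_pow, hvr]
    rfl
  have hArZ : A ^ r ∈ Subgroup.center (SpecialLinearGroup (Fin n) F) := by
    rw [Matrix.SpecialLinearGroup.mem_center_iff]
    refine ⟨(lu : F), ?_, ?_⟩
    · rw [Fintype.card_fin, ← Units.val_pow_eq_pow_val, hlun, Units.val_one]
    · exact hArval.symm
  -- order of A ^ r is d
  have hscalar_inj : ∀ a b : F, Matrix.scalar (Fin n) a = Matrix.scalar (Fin n) b → a = b := by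
    intro a b h
    have := congrFun (congrFun (congrArg (fun M : Matrix (Fin n) (Fin n) F => M) h) i0) i0
    simpa using this
  have hordAr : orderOf (A ^ r) = d := by
    rw [← hlu]
    rw [orderOf_eq_orderOf_iff]
    intro m
    constructor
    · intro h
      have h2 : Matrix.scalar (Fin n) ((lu : F) ^ m) = Matrix.scalar (Fin n) 1 := by
        have h3 := congrArg (fun B : SpecialLinearGroup (Fin n) F =>
          (B : Matrix (Fin n) (Fin n) F)) h
        simp only [Matrix.SpecialLinearGroup.coe_pow, hArval] at h3
        rw [map_pow]
        simpa using h3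
      have := hscalar_inj _ _ h2
      ext
      rw [Units.val_pow_eq_pow_val, this, Units.val_one]
    · intro h
      have h2 : (lu : F) ^ m = 1 := by rw [← Units.val_pow_eq_pow_val, h, Units.val_one]
      apply Subtype.ext
      rw [Matrix.SpecialLinearGroup.coe_pow, hArval, ← map_pow, h2]
      simp
  -- A ^ r is not in Z₀
  haveI : Nonempty (Fin n) := ⟨i0⟩
  have hcardZ : Nat.card (Subgroup.center (SpecialLinearGroup (Fin n) F)) ∣ d := by
    haveI : NeZero n := ⟨by omega⟩
    have e := Matrix.SpecialLinearGroup.center_equiv_rootsOfUnity' (R := F) i0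
    haveI : NeZero (Fintype.card (Fin n)) := ⟨by rw [Fintype.card_fin]; omega⟩
    haveI : IsCyclic (Subgroup.center (SpecialLinearGroup (Fin n) F)) :=
      isCyclic_of_surjective e.symm.toMonoidHom e.symm.surjective
    rw [← IsCyclic.exponent_eq_card]
    apply Monoid.exponent_dvd_of_forall_pow_eq_one
    intro z
    obtain ⟨c, hc, hscal⟩ := Matrix.SpecialLinearGroup.mem_center_iff.mp z.2
    rw [Fintype.card_fin] at hc
    have hc0 : c ≠ 0 := by
      intro h0
      rw [h0, zero_pow (by omega : n ≠ 0)] at hc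
      exact zero_ne_one hc
    have hcd : c ^ d = 1 := by
      have hu1 : (Units.mk0 c hc0) ^ n = 1 := by
        ext
        rw [Units.val_pow_eq_pow_val, Units.val_mk0, hc, Units.val_one]
      have hu2 : (Units.mk0 c hc0) ^ (q - 1) = 1 := by
        apply orderOf_dvd_iff_pow_eq_one.mp
        have h7 := orderOf_dvd_natCard (Units.mk0 c hc0)
        rw [Nat.card_units, Nat.card_eq_fintype_card] at h7
        exact h7
      have hdvd : orderOf (Units.mk0 c hc0) ∣ d :=
        Nat.dvd_gcd (orderOf_dvd_iff_pow_eq_one.mpr hu1) (orderOf_dvd_iff_pow_eq_one.mpr hu2)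
      have h8 := orderOf_dvd_iff_pow_eq_one.mp hdvd
      have h9 := congrArg Units.val h8
      rwa [Units.val_pow_eq_pow_val, Units.val_mk0, Units.val_one] at h9
    apply Subtype.ext
    apply Subtype.ext
    have h10 : ((((z ^ d : Subgroup.center (SpecialLinearGroup (Fin n) F)) :
        SpecialLinearGroup (Fin n) F)) : Matrix (Fin n) (Fin n) F)
        = ((z : SpecialLinearGroup (Fin n) F) : Matrix (Fin n) (Fin n) F) ^ d := by
      rw [SubgroupClass.coe_pow, Matrix.SpecialLinearGroup.coe_pow]
    rw [h10, ← hscal, ← map_pow, hcd]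
    simp
  have hArZ0 : A ^ r ∉ Z₀ := by
    intro hmem
    have h1' : orderOf (A ^ r) ∣ Nat.card Z₀ := Z₀.orderOf_dvd_natCard hmem
    have h2' : Nat.card Z₀ = Nat.card (Z₀.subgroupOf (Subgroup.center (SpecialLinearGroup (Fin n) F))) :=
      (Nat.card_congr (Subgroup.subgroupOfEquivOfLe hZ₀).toEquiv).symm
    have h3' : Nat.card (Z₀.subgroupOf (Subgroup.center (SpecialLinearGroup (Fin n) F))) * r
        = Nat.card (Subgroup.center (SpecialLinearGroup (Fin n) F)) := by
      rw [← hZ₀idx]; exact Subgroup.card_mul_index _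
    have h4' : d ∣ Nat.card (Z₀.subgroupOf (Subgroup.center (SpecialLinearGroup (Fin n) F))) := by
      rw [← hordAr, ← h2']; exact h1'
    have h5' : d * r ∣ d := dvd_trans (mul_dvd_mul_right h4' r) (h3' ▸ hcardZ)
    have := Nat.le_of_dvd hdpos h5'
    nlinarith
  -- the element s of S and the fixed projective point
  set s : SpecialLinearGroup (Fin n) F ⧸ Z₀ := QuotientGroup.mk A with hs_def
  have hs : s ^ r ≠ 1 := by
    intro h
    apply hArZ0
    apply (QuotientGroup.eq_one_iff (A ^ r)).mp
    rw [QuotientGroup.mk_pow]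
    exact h
  set w : WreathProd (ProjectiveSpecialLinearGroup (Fin n) F) (ℙ F (Fin n → F)) r
    := ((θ s : S') : WreathProd (ProjectiveSpecialLinearGroup (Fin n) F) (ℙ F (Fin n → F)) r)
    with hw_def
  have hg : SemidirectProduct.rightHom w
      = (QuotientGroup.mk A : ProjectiveSpecialLinearGroup (Fin n) F) := by
    have h := hθ s
    rw [hs_def] at h
    change _ = (QuotientGroup.mk (MonoidHom.id _ A) : ProjectiveSpecialLinearGroup (Fin n) F) at h
    simp only [MonoidHom.id_apply] at h
    exact h
  have hg' : w.right = (QuotientGroup.mk A : ProjectiveSpecialLinearGroup (Fin n) F) := hg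
  have hx0 : (Pi.single i0 1 : Fin n → F) ≠ 0 := by
    intro h
    have := congrFun h i0
    rw [Pi.single_eq_same] at this
    exact one_ne_zero this
  set x : ℙ F (Fin n → F) := Projectivization.mk F (Pi.single i0 1) hx0 with hx_def
  have hfix : w.right • x = x := by
    rw [hg', hx_def, psl_smul, sl_smul_mk, mk_eq_mk_iff']
    refine ⟨(β : F), ?_⟩
    rw [SpecialLinearGroup.toLin'_apply, Matrix.toLin'_apply]
    funext i
    rcases eq_or_ne i i0 with h | h
    · subst h
      rw [Matrix.mulVec_diagonal]
      simp [hv_def]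
    · rw [Matrix.mulVec_diagonal]
      simp [h, Pi.single_eq_of_ne h]
  -- w ^ r lies in the diagonal copy of ZMod r
  have hwr : w ^ r ∈ S' ⊓ (SemidirectProduct.inl : Multiplicative (ℙ F (Fin n → F) → ZMod r) →*
      WreathProd (ProjectiveSpecialLinearGroup (Fin n) F) (ℙ F (Fin n → F)) r).range := by
    constructor
    · have : w ^ r = ((θ (s ^ r) : S') : WreathProd (ProjectiveSpecialLinearGroup (Fin n) F)
          (ℙ F (Fin n → F)) r) := by
        rw [hw_def, map_pow]
        rfl
      rw [this]
      exact (θ (s ^ r)).2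
    · rw [SemidirectProduct.range_inl_eq_ker_rightHom]
      have h11 : SemidirectProduct.rightHom (w ^ r) = 1 := by
        rw [map_pow, hg, ← QuotientGroup.mk_pow]
        exact (QuotientGroup.eq_one_iff (A ^ r)).mpr hArZ
      exact MonoidHom.mem_ker.mpr h11
  rw [hinf] at hwr
  obtain ⟨c, hc⟩ := hwr
  -- evaluate the left component at the fixed point
  have h0 : Multiplicative.toAdd ((w ^ r).left) x = 0 := by
    rw [wreath_pow_left_toAdd w x hfix r, nsmul_eq_mul, ZMod.natCast_self, zero_mul]
  have hcx : Multiplicative.toAdd ((w ^ r).left) x = Multiplicative.toAdd c := by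
    rw [← hc]
    rfl
  have hc1 : c = 1 := by
    apply Multiplicative.toAdd.injective
    rw [← hcx, h0]
    rfl
  rw [hc1] at hc
  simp only [_root_.map_one] at hc
  -- conclude s ^ r = 1, a contradiction
  apply hs
  have hθ1 : ((θ (s ^ r) : S') : WreathProd (ProjectiveSpecialLinearGroup (Fin n) F)
      (ℙ F (Fin n → F)) r) = 1 := by
    rw [map_pow]
    rw [show ((((θ s) ^ r : S') : WreathProd (ProjectiveSpecialLinearGroup (Fin n) F)
      (ℙ F (Fin n → F)) r)) = w ^ r from rfl]
    exact hc.symm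
  have := (OneMemClass.coe_eq_one).mp hθ1
  exact θ.injective (by rw [this, _root_.map_one])
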